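/- Let p be prime, n coprime to p, and let g(c) ∈ 𝔽_p[c] be the gcd of the coefficients r_0(c), …, r_{p-1}(c) of the remainder of x^n - 1 upon division by x^p - x - c. Then g(x^p - x) equals the greatest common divisor of the p polynomials (x + λ)^n - 1 for λ ∈ 𝔽_p; in particular the degree of that gcd is p times the degree of g. -/

import Mathlib

open Polynomial

theorem stmt_16 (p : ℕ) [Fact p.Prime] (n : ℕ) (hn : 0 < n) (hcop : Nat.Coprime n p)
    (r : Fin p → Polynomial (ZMod p))
    (hr : ∀ i : Fin p, r i =
      ((X ^ n - 1 : Polynomial (Polynomial (ZMod p))) %ₘ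
        (X ^ p - X - C Polynomial.X)).coeff i)
    (g : Polynomial (ZMod p))
    (hg : g = Finset.univ.gcd r) :
    g.comp (X ^ p - X) =
        Finset.univ.gcd (fun lam : ZMod p => (X + C lam) ^ n - 1) ∧
      (Finset.univ.gcd (fun lam : ZMod p => (X + C lam) ^ n - 1)).natDegree =
        p * g.natDegree := by
  classical
  have hp : p.Prime := Fact.out
  have hp1 : (1 : WithBot ℕ) < (p : ℕ) := by exact_mod_cast hp.one_lt
  set y : Polynomial (ZMod p) := X ^ p - X with hy
  have hmy : y.Monic := by
    apply monic_X_pow_sub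
    rw [degree_X]; exact hp1
  have hdy : y.natDegree = p := by
    rw [hy, natDegree_sub_eq_left_of_natDegree_lt, natDegree_X_pow]
    rw [natDegree_X, natDegree_X_pow]; exact hp.one_lt
  -- composition with y equals aeval y
  have hcomp : ∀ a : Polynomial (ZMod p), a.comp y = aeval y a := by
    intro a
    rw [aeval_def, Polynomial.algebraMap_eq]; rfl
  -- the monic divisor
  set b : Polynomial (Polynomial (ZMod p)) := X ^ p - X - C Polynomial.X with hb
  have hbX : b = X ^ p - (X + C Polynomial.X) := by rw [hb, sub_sub]
  have hdXC : ((X : Polynomial (Polynomial (ZMod p))) + C Polynomial.X).degree < ((p : ℕ) : WithBot ℕ) := by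
    apply lt_of_le_of_lt (degree_add_le _ _)
    rw [degree_X]
    exact max_lt hp1 (lt_of_le_of_lt degree_C_le (by exact_mod_cast hp.pos))
  have hmb : b.Monic := by
    rw [hbX]; exact monic_X_pow_sub hdXC
  set q : Polynomial (Polynomial (ZMod p)) :=
      (X ^ n - 1 : Polynomial (Polynomial (ZMod p))) %ₘ b with hq
  have hdq : q.natDegree < p := by
    have h1 := degree_modByMonic_lt (X ^ n - 1 : Polynomial (Polynomial (ZMod p))) hmb
    have hdb : b.degree = (p : ℕ) := by
      rw [hbX, degree_sub_eq_left_of_degree_lt, degree_X_pow]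
      rw [degree_X_pow]; exact hdXC
    rw [hdb] at h1
    by_cases h0 : q = 0
    · rw [h0, natDegree_zero]; exact hp.pos
    · exact natDegree_lt_iff_degree_lt h0 |>.mpr h1
  -- the key identity
  have key : ∀ lam : ZMod p, (X + C lam) ^ n - 1
      = ∑ i ∈ Finset.range p, aeval y (q.coeff i) * (X + C lam) ^ i := by
    intro lam
    set φ : Polynomial (ZMod p) →+* Polynomial (ZMod p) := (aeval y).toRingHom with hφ
    set s : Polynomial (ZMod p) := X + C lam with hs
    have hid := modByMonic_add_div (X ^ n - 1 : Polynomial (Polynomial (ZMod p))) b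
    have hEb : eval₂ φ s b = 0 := by
      rw [hb, eval₂_sub, eval₂_sub, eval₂_pow, eval₂_X, eval₂_C]
      have hφX : φ Polynomial.X = y := by simp [hφ]
      have hsp : s ^ p = X ^ p + C lam := by
        rw [hs, add_pow_char, ← C_pow, ZMod.pow_card]
      rw [hφX, hsp, hs, hy]; ring
    have h3 : eval₂ φ s (X ^ n - 1 : Polynomial (Polynomial (ZMod p))) = s ^ n - 1 := by
      rw [eval₂_sub, eval₂_pow, eval₂_X, eval₂_one]
    calc s ^ n - 1 = eval₂ φ s (X ^ n - 1 : Polynomial (Polynomial (ZMod p))) := h3.symm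
      _ = eval₂ φ s (q + b * ((X ^ n - 1 : Polynomial (Polynomial (ZMod p))) /ₘ b)) := by
          rw [hid]
      _ = eval₂ φ s q + eval₂ φ s b * eval₂ φ s ((X ^ n - 1 : Polynomial (Polynomial (ZMod p))) /ₘ b) := by
          rw [eval₂_add, eval₂_mul]
      _ = eval₂ φ s q := by rw [hEb]; ring
      _ = ∑ i ∈ Finset.range p, φ (q.coeff i) * s ^ i := eval₂_eq_sum_range' φ hdq s
      _ = ∑ i ∈ Finset.range p, aeval y (q.coeff i) * s ^ i := rfl
  -- X^n - 1 is nonzero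
  have hX1 : ((X : Polynomial (ZMod p)) ^ n - 1) ≠ 0 := by
    refine (monic_X_pow_sub ?_).ne_zero
    rw [degree_one]; exact_mod_cast hn
  -- g is nonzero and monic
  have hg0 : g ≠ 0 := by
    intro h
    have hall : ∀ i : Fin p, r i = 0 := by
      rw [hg] at h
      exact fun i => Finset.gcd_eq_zero_iff.mp h i (Finset.mem_univ i)
    apply hX1
    have hk := key 0
    simp only [map_zero, add_zero] at hk
    rw [hk]
    apply Finset.sum_eq_zero
    intro i hi
    have hqi : q.coeff i = r ⟨i, Finset.mem_range.mp hi⟩ :=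
      (hr ⟨i, Finset.mem_range.mp hi⟩).symm
    rw [hqi, hall, map_zero, zero_mul]
  have hgnorm : normalize g = g := by rw [hg]; exact Finset.normalize_gcd
  have hgm : g.Monic := hgnorm ▸ monic_normalize hg0
  -- D
  set D := Finset.univ.gcd (fun lam : ZMod p => (X + C lam) ^ n - 1) with hD
  have hD0 : D ≠ 0 := by
    intro h
    have h1 := Finset.gcd_eq_zero_iff.mp h 0 (Finset.mem_univ 0)
    simp only [map_zero, add_zero] at h1
    exact hX1 h1
  have hDnorm : normalize D = D := by rw [hD]; exact Finset.normalize_gcd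
  have hDm : D.Monic := hDnorm ▸ monic_normalize hD0
  -- g.comp y divides D
  have hgr : ∀ i : Fin p, g ∣ r i := by
    intro i
    rw [hg]
    exact Finset.gcd_dvd (Finset.mem_univ i)
  have hgD : g.comp y ∣ D := by
    apply Finset.dvd_gcd
    intro lam _
    rw [key lam]
    apply Finset.dvd_sum
    intro i hi
    apply Dvd.dvd.mul_right
    have h1 : g ∣ q.coeff i := by
      have := hgr ⟨i, Finset.mem_range.mp hi⟩
      rwa [hr ⟨i, Finset.mem_range.mp hi⟩] at this
    rw [hcomp]
    obtain ⟨c, hc⟩ := h1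
    exact ⟨aeval y c, by rw [hc, map_mul]⟩
  -- Vandermonde: D divides each aeval y (r i)
  have hvd : ∀ i : Fin p, D ∣ aeval y (r i) := by
    set v : Fin p → Polynomial (ZMod p) := fun k => X + C ((k : ℕ) : ZMod p) with hv
    set M := Matrix.vandermonde v with hM
    set w : Fin p → Polynomial (ZMod p) := fun i => aeval y (r i) with hw
    set u : Fin p → Polynomial (ZMod p) := fun k => v k ^ n - 1 with hu
    have hMw : M.mulVec w = u := by
      funext k
      have hk := key ((k : ℕ) : ZMod p)
      rw [← Fin.sum_univ_eq_sum_range (fun i => aeval y (q.coeff i) * (X + C ((k : ℕ) : ZMod p)) ^ i) p] at hk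
      show ∑ j, M k j * w j = u k
      rw [hu, hv]
      simp only []
      rw [hk]
      apply Finset.sum_congr rfl
      intro j _
      rw [hM, Matrix.vandermonde_apply, hw, hv]
      simp only []
      rw [hr j, mul_comm]
    have hdet : IsUnit M.det := by
      rw [hM, Matrix.det_vandermonde]
      have : ∀ i : Fin p, ∀ j ∈ Finset.Ioi i, v j - v i = C (((j : ℕ) : ZMod p) - ((i : ℕ) : ZMod p)) := by
        intro i j _
        rw [hv]; simp only []
        rw [map_sub]; ring
      rw [Finset.prod_congr rfl (fun i _ => Finset.prod_congr rfl (this i))]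
      have hC : (∏ i : Fin p, ∏ j ∈ Finset.Ioi i,
            C (((j : ℕ) : ZMod p) - ((i : ℕ) : ZMod p)))
          = C (∏ i : Fin p, ∏ j ∈ Finset.Ioi i,
            (((j : ℕ) : ZMod p) - ((i : ℕ) : ZMod p))) := by
        rw [map_prod]
        exact Finset.prod_congr rfl fun i _ =>
          (map_prod (C : ZMod p →+* Polynomial (ZMod p)) _ _).symm
      rw [hC]
      rw [Polynomial.isUnit_C]
      rw [isUnit_iff_ne_zero]
      rw [Finset.prod_ne_zero_iff]
      intro i _
      rw [Finset.prod_ne_zero_iff]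
      intro j hj
      have hij0 : i < j := Finset.mem_Ioi.mp hj
      have hij : (i : ℕ) < (j : ℕ) := hij0
      refine sub_ne_zero.mpr ?_
      intro hc
      have h1 : ((j : ℕ) : ZMod p).val = (j : ℕ) := ZMod.val_cast_of_lt j.isLt
      have h2 : ((i : ℕ) : ZMod p).val = (i : ℕ) := ZMod.val_cast_of_lt i.isLt
      rw [hc, h2] at h1
      omega
    have hadj : ∀ i, M.det * w i = ∑ k, M.adjugate i k * u k := by
      have h1 : (M.adjugate).mulVec u = M.det • w := by
        rw [← hMw, Matrix.mulVec_mulVec, Matrix.adjugate_mul, Matrix.smul_mulVec,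
          Matrix.one_mulVec]
      intro i
      have h2 := congrFun h1 i
      simp only [Matrix.mulVec, dotProduct, Pi.smul_apply, smul_eq_mul] at h2
      exact h2.symm
    intro i
    have hDdet : D ∣ M.det * w i := by
      rw [hadj i]
      apply Finset.dvd_sum
      intro k _
      apply Dvd.dvd.mul_left
      have h1 : D ∣ (X + C ((k : ℕ) : ZMod p)) ^ n - 1 := by
        rw [hD]
        exact Finset.gcd_dvd (Finset.mem_univ (((k : ℕ) : ZMod p)))
      exact h1
    exact (hdet.dvd_mul_left).mp hDdet
  -- Bezout: g is a combination of the r i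
  have hbez : ∃ a : Fin p → Polynomial (ZMod p), ∑ i, a i • r i = g := by
    have hmem : g ∈ Ideal.span (Set.range r) := by
      obtain ⟨d, hd⟩ := (IsPrincipalIdealRing.principal (Ideal.span (Set.range r))).principal
      have hdr : ∀ i, d ∣ r i := by
        intro i
        have h1 : r i ∈ Ideal.span (Set.range r) := Ideal.subset_span ⟨i, rfl⟩
        rw [hd] at h1
        exact (Ideal.mem_span_singleton).mp h1
      have hdg : d ∣ g := by
        rw [hg]
        exact Finset.dvd_gcd fun i _ => hdr i
      rw [hd]
      exact (Ideal.mem_span_singleton).mpr hdg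
    exact (Submodule.mem_span_range_iff_exists_fun _).mp hmem
  have hDg : D ∣ g.comp y := by
    obtain ⟨a, ha⟩ := hbez
    have h1 : g.comp y = ∑ i, aeval y (a i) * aeval y (r i) := by
      rw [hcomp, ← ha, map_sum]
      apply Finset.sum_congr rfl
      intro i _
      rw [smul_eq_mul, map_mul]
    rw [h1]
    exact Finset.dvd_sum fun i _ => (hvd i).mul_left _
  -- conclusion
  have hgcm : (g.comp y).Monic := hgm.comp hmy (by rw [hdy]; exact hp.pos.ne')
  have heq : g.comp y = D :=
    eq_of_monic_of_associated hgcm hDm (associated_of_dvd_dvd hgD hDg)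
  refine ⟨heq, ?_⟩
  rw [← heq, natDegree_comp, hdy, mul_comm]
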